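/- Under the hypothesis min_i v_i ≥ (1 + ‖h‖²P)/a_max² for all i = 1,…,M_s, the rank-one upper bound C̄₁ = κ/(M_s+1)·[Σᵢ log((‖h‖²P + 1 + a_max²vᵢ)/(a_max²vᵢ)) + log(1 + ‖h‖²P)] satisfies C̄₁ − κ/(M_s+1)·log(1+‖h‖²P) ≤ κ·M_s/(M_s+1). -/
import Mathlib


/-- Remark 5's gap bound: under `vᵢ ≥ (1 + ‖h‖²P)/a_max²`, the rank-one upper
bound `C̄₁` exceeds its prelog approximation `κ/(Ms+1)·log₂(1+‖h‖²P)` by at most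
`κ·Ms/(Ms+1)` bits. -/
theorem rankOne_bound_gap (Ms : ℕ) (hMs : 1 ≤ Ms) (κ P hsq amax : ℝ)
    (v : Fin Ms → ℝ) (hκ : 0 < κ) (hP : 0 ≤ P) (hhsq : 0 ≤ hsq)
    (hamax : 0 < amax) (hv : ∀ i, 0 < v i)
    (hmin : ∀ i, (1 + hsq * P) / amax ^ 2 ≤ v i) :
    (κ / ((Ms : ℝ) + 1)) *
        ((∑ i, Real.logb 2 ((hsq * P + 1 + amax ^ 2 * v i) / (amax ^ 2 * v i)))
          + Real.logb 2 (1 + hsq * P))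
      - (κ / ((Ms : ℝ) + 1)) * Real.logb 2 (1 + hsq * P)
      ≤ κ * (Ms : ℝ) / ((Ms : ℝ) + 1) := by
  have hden : (0:ℝ) < (Ms : ℝ) + 1 := by positivity
  have hsum : (∑ i, Real.logb 2 ((hsq * P + 1 + amax ^ 2 * v i) / (amax ^ 2 * v i)))
      ≤ (Ms : ℝ) := by
    calc (∑ i, Real.logb 2 ((hsq * P + 1 + amax ^ 2 * v i) / (amax ^ 2 * v i)))
        ≤ ∑ _i : Fin Ms, (1:ℝ) := by
          apply Finset.sum_le_sum
          intro i _
          have hvi := hv i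
          have ha2 : (0:ℝ) < amax ^ 2 := by positivity
          have hkey : 1 + hsq * P ≤ amax ^ 2 * v i := by
            have := hmin i
            rw [div_le_iff₀ ha2] at this
            linarith [this]
          have hratio : (hsq * P + 1 + amax ^ 2 * v i) / (amax ^ 2 * v i) ≤ 2 := by
            rw [div_le_iff₀ (by positivity)]
            linarith
          calc Real.logb 2 ((hsq * P + 1 + amax ^ 2 * v i) / (amax ^ 2 * v i))
              ≤ Real.logb 2 2 := by
                gcongr
                norm_num
            _ = 1 := Real.logb_self_eq_one (by norm_num)
      _ = (Ms : ℝ) := by simp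
  have : (κ / ((Ms : ℝ) + 1)) *
        ((∑ i, Real.logb 2 ((hsq * P + 1 + amax ^ 2 * v i) / (amax ^ 2 * v i)))
          + Real.logb 2 (1 + hsq * P))
      - (κ / ((Ms : ℝ) + 1)) * Real.logb 2 (1 + hsq * P)
      = (κ / ((Ms : ℝ) + 1)) *
        (∑ i, Real.logb 2 ((hsq * P + 1 + amax ^ 2 * v i) / (amax ^ 2 * v i))) := by
    ring
  rw [this, div_mul_eq_mul_div, div_le_div_iff₀ hden hden]
  have hκMs : κ * (∑ i, Real.logb 2 ((hsq * P + 1 + amax ^ 2 * v i) / (amax ^ 2 * v i)))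
      ≤ κ * (Ms : ℝ) := by
    exact mul_le_mul_of_nonneg_left hsum hκ.le
  nlinarith
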